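/- Let G be a group, Λ ⊆ G a subset with e ∈ Λ and Λ = Λ⁻¹ (in the context of approximate subgroups), and let r₁ > r₂ > r₃ > r₄ > 0. Write B_r for the closed ball of radius r about e with respect to a bi-invariant metric d on G, and suppose balls are normal (gB_r g⁻¹ = B_r for all g). Assume B_{r₁} ⊆ Λ²B_{r₂}, B_{r₂} ⊆ Λ²B_{r₃}, and B_{r₁+r₃} ∩ Λ⁴ ⊆ Λ²B_{r₄}. Then B_{r₁} ⊆ Λ²B_{r₃+r₄}. -/
import Mathlib


open Pointwise Metric

/-- Compounding interest claim: with `B_r` the ball of radius `r` about the identity of a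
group with bi-invariant metric, and `Λ` symmetric containing the identity, the inclusions
`B_{r₁} ⊆ Λ²B_{r₂}`, `B_{r₂} ⊆ Λ²B_{r₃}` and `B_{r₁+r₃} ∩ Λ⁴ ⊆ Λ²B_{r₄}` imply
`B_{r₁} ⊆ Λ²B_{r₃+r₄}`. -/
theorem compounding_interest {G : Type*} [Group G] [MetricSpace G]
    (hleft : ∀ g x y : G, dist (g * x) (g * y) = dist x y)
    (hright : ∀ g x y : G, dist (x * g) (y * g) = dist x y)
    (Λ : Set G) (hΛ1 : (1 : G) ∈ Λ) (hΛsymm : Λ⁻¹ = Λ)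
    (r₁ r₂ r₃ r₄ : ℝ) (h12 : r₂ < r₁) (h23 : r₃ < r₂) (h34 : r₄ < r₃) (h4 : 0 < r₄)
    (H1 : ball (1 : G) r₁ ⊆ Λ ^ 2 * ball (1 : G) r₂)
    (H2 : ball (1 : G) r₂ ⊆ Λ ^ 2 * ball (1 : G) r₃)
    (H3 : ball (1 : G) (r₁ + r₃) ∩ Λ ^ 4 ⊆ Λ ^ 2 * ball (1 : G) r₄) :
    ball (1 : G) r₁ ⊆ Λ ^ 2 * ball (1 : G) (r₃ + r₄) := by
  intro g hg
  obtain ⟨a, ha, b, hb, rfl⟩ := H1 hg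
  obtain ⟨c, hc, d, hd, rfl⟩ := H2 hb
  have hd1 : dist (1 : G) d < r₃ := by simpa [dist_comm] using (mem_ball.mp hd)
  have hg1 : dist (1 : G) (a * (c * d)) < r₁ := by simpa [dist_comm] using (mem_ball.mp hg)
  -- a*c ∈ ball 1 (r₁+r₃)
  have hac : a * c ∈ ball (1 : G) (r₁ + r₃) := by
    have h1 : dist (a * c) (a * (c * d)) = dist (1 : G) d := by
      have := hright d (a * c) 1
      calc dist (a * c) (a * (c * d)) = dist (a * c) (a * c * d) := by rw [mul_assoc]
        _ = dist (a * c * d) (a * c) := dist_comm _ _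
        _ = dist (a * c * d) (a * c * 1) := by rw [mul_one]
        _ = dist d 1 := hleft (a * c) d 1
        _ = dist (1 : G) d := dist_comm _ _
    have : dist (a * c) 1 ≤ dist (a * c) (a * (c * d)) + dist (a * (c * d)) 1 :=
      dist_triangle _ _ _
    rw [mem_ball, h1] at *
    calc dist (a * c) 1 ≤ dist (1 : G) d + dist (a * (c * d)) 1 := this
      _ < r₃ + r₁ := add_lt_add hd1 (by rwa [dist_comm])
      _ = r₁ + r₃ := add_comm _ _
  have hac4 : a * c ∈ Λ ^ 4 := by
    have : Λ ^ 4 = Λ ^ 2 * Λ ^ 2 := by rw [← pow_add]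
    rw [this]
    exact Set.mul_mem_mul ha hc
  obtain ⟨u, hu, v, hv, huv⟩ := H3 ⟨hac, hac4⟩
  refine ⟨u, hu, v * d, ?_, show u * (v * d) = a * (c * d) by simp only [] at huv; rw [← mul_assoc, huv, mul_assoc]⟩
  have hv1 : dist (1 : G) v < r₄ := by simpa [dist_comm] using (mem_ball.mp hv)
  have h2 : dist v (v * d) = dist (1 : G) d := by
    have := hleft v 1 d
    rw [mul_one] at this
    rw [← this, dist_comm]
  rw [mem_ball]
  calc dist (v * d) 1 ≤ dist (v * d) v + dist v 1 := dist_triangle _ _ _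
    _ = dist (1 : G) d + dist (1 : G) v := by rw [dist_comm (v*d) v, h2, dist_comm v 1]
    _ < r₃ + r₄ := add_lt_add hd1 hv1
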